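/- arXiv:2004.09454 — 6 statements merged into one kernel-verified Lean document; each statement's English description precedes it below -/
import Mathlib

section
/- Let I be a set of n arms with means θ_i ∈ (0,1), and let V ⊆ I. Let j ∈ {1,…,n−1} and k ∈ {1,…,|V|−1} be indices such that θ_{[k]}(V) ≥ θ_{[j]}(I) ≥ θ_{[j+1]}(I) ≥ θ_{[k+1]}(V), where θ_{[t]}(S) is the t-th largest mean among arms in S. Then H^⟨k⟩(V) ≤ Σ_{i∈V} (Δ_i^⟨j⟩(I))^{−2} ≤ H^⟨j⟩(I). -/
/-- The `r`-th largest mean (1-indexed) among arms of `V`. -/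
noncomputable def kth {n : ℕ} (θ : Fin n → ℝ) (V : Finset (Fin n)) (r : ℕ) : ℝ :=
  ((V.val.map θ).sort (· ≥ ·)).getD (r - 1) 0

/-- The gap `Δ_i^⟨t⟩(V)` of arm `i` with respect to pivot `t` in `V`. -/
noncomputable def gap {n : ℕ} (θ : Fin n → ℝ) (V : Finset (Fin n)) (t : ℕ) (i : Fin n) : ℝ :=
  if kth θ V t ≤ θ i then θ i - kth θ V (t + 1) else kth θ V t - θ i

/-- Instance complexity `H^⟨t⟩(V) = Σ_{i∈V} (Δ_i^⟨t⟩(V))⁻²`. -/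
noncomputable def Hc {n : ℕ} (θ : Fin n → ℝ) (V : Finset (Fin n)) (t : ℕ) : ℝ :=
  ∑ i ∈ V, ((gap θ V t i) ^ 2)⁻¹

theorem stmt0 (n : ℕ) (θ : Fin n → ℝ) (hθ : ∀ i, θ i ∈ Set.Ioo (0 : ℝ) 1)
    (I V : Finset (Fin n)) (hI : I.card = n) (hVI : V ⊆ I)
    (j k : ℕ) (hj1 : 1 ≤ j) (hj2 : j ≤ n - 1) (hk1 : 1 ≤ k) (hk2 : k ≤ V.card - 1)
    (h1 : kth θ I j ≤ kth θ V k)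
    (h2 : kth θ I (j + 1) ≤ kth θ I j)
    (h3 : kth θ V (k + 1) ≤ kth θ I (j + 1))
    (hposI : ∀ i ∈ I, 0 < gap θ I j i)
    (hposV : ∀ i ∈ V, 0 < gap θ V k i) :
    Hc θ V k ≤ ∑ i ∈ V, ((gap θ I j i) ^ 2)⁻¹ ∧
      ∑ i ∈ V, ((gap θ I j i) ^ 2)⁻¹ ≤ Hc θ I j := by
  -- slip lemma: if x ∈ V and x < kth θ V k then x ≤ kth θ V (k+1)
  have slip : ∀ i ∈ V, θ i < kth θ V k → θ i ≤ kth θ V (k + 1) := by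
    intro i hi hlt
    set L : List ℝ := (V.val.map θ).sort (· ≥ ·) with hL
    have hsorted : L.Pairwise (· ≥ ·) := Multiset.pairwise_sort _ _
    have hlen : L.length = V.card := by
      simp [hL, Multiset.length_sort]
    have hVcard : 2 ≤ V.card := by
      rcases Nat.lt_or_ge V.card 2 with h | h
      · interval_cases h' : V.card <;> omega
      · exact h
    have hk : k < L.length := by omega
    have hk1' : k - 1 < L.length := by omega
    have hmem : θ i ∈ L := by
      rw [hL, Multiset.mem_sort]
      exact Multiset.mem_map_of_mem θ hi
    obtain ⟨m, hm⟩ := List.mem_iff_get.mp hmem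
    have hkthk : kth θ V k = L.get ⟨k - 1, hk1'⟩ := by
      rw [kth, ← hL, List.getD_eq_get (i := ⟨k - 1, hk1'⟩)]
    have hkthk1 : kth θ V (k + 1) = L.get ⟨k, hk⟩ := by
      rw [kth, ← hL]
      have : k + 1 - 1 = k := by omega
      rw [this, List.getD_eq_get (i := ⟨k, hk⟩)]
    rcases Nat.lt_or_ge m.1 k with hmk | hmk
    · -- m.1 ≤ k - 1 : θ i ≥ kth θ V k, contradiction
      exfalso
      have hle : m.1 ≤ k - 1 := by omega
      have : L.get ⟨k - 1, hk1'⟩ ≤ L.get m := by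
        rcases eq_or_lt_of_le hle with he | hlt'
        · have : m = (⟨k - 1, hk1'⟩ : Fin L.length) := by
            apply Fin.ext; simp only [Fin.val_mk]; omega
          rw [this]
        · exact hsorted.rel_get_of_lt (Fin.lt_iff_val_lt_val.mpr hlt')
      rw [hm] at this
      rw [hkthk] at hlt
      linarith
    · -- m.1 ≥ k : θ i ≤ kth θ V (k+1)
      rw [hkthk1]
      rcases eq_or_lt_of_le hmk with he | hlt'
      · have : m = (⟨k, hk⟩ : Fin L.length) := by apply Fin.ext; simp only [Fin.val_mk]; omega
        rw [← this, hm]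
      · have : L.get ⟨k, hk⟩ ≥ L.get m := hsorted.rel_get_of_lt (Fin.lt_iff_val_lt_val.mpr hlt')
        rw [hm] at this
        linarith
  -- main pointwise inequality
  have key : ∀ i ∈ V, gap θ I j i ≤ gap θ V k i := by
    intro i hi
    have hiI : i ∈ I := hVI hi
    rcases le_or_gt (kth θ V k) (θ i) with hc | hc
    · have ha : kth θ I j ≤ θ i := le_trans h1 hc
      simp only [gap, if_pos ha, if_pos hc]
      linarith
    · have hd : θ i ≤ kth θ V (k + 1) := slip i hi hc
      rcases le_or_gt (kth θ I j) (θ i) with ha | ha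
      · exfalso
        have := hposI i hiI
        rw [gap, if_pos ha] at this
        linarith
      · simp only [gap, if_neg (not_le.mpr hc), if_neg (not_le.mpr ha)]
        linarith
  constructor
  · apply Finset.sum_le_sum
    intro i hi
    have h0 := hposI i (hVI hi)
    have h1' := key i hi
    have hsq : (gap θ I j i) ^ 2 ≤ (gap θ V k i) ^ 2 :=
      pow_le_pow_left₀ (le_of_lt h0) h1' 2
    exact inv_anti₀ (by positivity) hsq
  · apply Finset.sum_le_sum_of_subset_of_nonneg hVI
    intro i _ _
    positivity
end

section
/- Let I be a set of n arms with means θ_i, V ⊆ I, j ∈ {1,…,n−1}, k ∈ {1,…,|V|−1}, and ε > 0 such that θ_{[k]}(V) ≥ θ_{[j]}(I) ≥ θ_{[j+1]}(I) ≥ θ_{[k+1]}(V). Then the ε-truncated complexities satisfy H_ε^⟨k⟩(V) ≤ Σ_{i∈V} max{Δ_i^⟨j⟩(I), ε}^{−2} ≤ H_ε^⟨j⟩(I). -/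
/-- `ε`-truncated instance complexity `H_ε^⟨t⟩(V) = Σ_{i∈V} max{Δ_i^⟨t⟩(V), ε}⁻²`. -/
noncomputable def Hctr {n : ℕ} (θ : Fin n → ℝ) (V : Finset (Fin n)) (t : ℕ) (ε : ℝ) : ℝ :=
  ∑ i ∈ V, ((max (gap θ V t i) ε) ^ 2)⁻¹

/-- Key: for a member of `V`, the value is either at least the `k`-th largest
or at most the `(k+1)`-th largest. -/
lemma kth_mem_split {n : ℕ} (θ : Fin n → ℝ) (V : Finset (Fin n)) (k : ℕ)
    (hk1 : 1 ≤ k) (hk : k < V.card) (i : Fin n) (hi : i ∈ V) :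
    kth θ V k ≤ θ i ∨ θ i ≤ kth θ V (k + 1) := by
  set l := ((V.val.map θ).sort (· ≥ ·)) with hl
  have hlen : l.length = V.card := by
    rw [hl, Multiset.length_sort, Multiset.card_map]; rfl
  have hmem : θ i ∈ l := by
    rw [hl, Multiset.mem_sort]
    exact Multiset.mem_map_of_mem θ hi
  have hsorted : l.Pairwise (· ≥ ·) := Multiset.pairwise_sort _ _
  obtain ⟨m, hm, hmv⟩ := List.mem_iff_getElem.mp hmem
  have hk1' : k - 1 < l.length := by omega
  have hk' : k < l.length := by omega
  have e1 : kth θ V k = l[k-1] := List.getD_eq_getElem l 0 hk1'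
  have e2 : kth θ V (k+1) = l[k] := by
    have : k + 1 - 1 = k := by omega
    rw [kth, this]; exact List.getD_eq_getElem l 0 hk'
  rcases le_or_gt m (k-1) with h | h
  · left
    rw [e1, ← hmv]
    rcases eq_or_lt_of_le h with h | h
    · simp [h]
    · exact List.pairwise_iff_getElem.mp hsorted _ _ _ _ h
  · right
    rw [e2, ← hmv]
    rcases eq_or_lt_of_le (show k ≤ m by omega) with h | h
    · simp [h]
    · exact List.pairwise_iff_getElem.mp hsorted _ _ _ _ h

theorem stmt1 (n : ℕ) (θ : Fin n → ℝ)
    (I V : Finset (Fin n)) (hI : I.card = n) (hVI : V ⊆ I)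
    (j k : ℕ) (hj1 : 1 ≤ j) (hj2 : j ≤ n - 1) (hk1 : 1 ≤ k) (hk2 : k ≤ V.card - 1)
    (ε : ℝ) (hε : 0 < ε)
    (h1 : kth θ I j ≤ kth θ V k)
    (h2 : kth θ I (j + 1) ≤ kth θ I j)
    (h3 : kth θ V (k + 1) ≤ kth θ I (j + 1)) :
    Hctr θ V k ε ≤ ∑ i ∈ V, ((max (gap θ I j i) ε) ^ 2)⁻¹ ∧
      ∑ i ∈ V, ((max (gap θ I j i) ε) ^ 2)⁻¹ ≤ Hctr θ I j ε := by
  constructor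
  · unfold Hctr
    apply Finset.sum_le_sum
    intro i hi
    have hkey := kth_mem_split θ V k hk1 (by omega) i hi
    have hgap : gap θ I j i ≤ gap θ V k i := by
      unfold gap
      split_ifs with hA hB hB <;> rcases hkey with h | h <;> linarith
    have hle : max (gap θ I j i) ε ≤ max (gap θ V k i) ε :=
      max_le_max hgap le_rfl
    have hpos : 0 < max (gap θ I j i) ε := lt_of_lt_of_le hε (le_max_right _ _)
    apply inv_anti₀ (pow_pos hpos 2)
    exact pow_le_pow_left₀ hpos.le hle 2
  · unfold Hctr
    apply Finset.sum_le_sum_of_subset_of_nonneg hVI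
    intro i _ _
    positivity
end

section
/- In the recursive hard instance I ∼ 𝓘(C, μ, n) with n > K^{10} and blocks I_1,…,I_{2η+1}: (a) any arm in block j has mean θ ∈ 1/2 + C·n^{−1/4}·((j−η−1)/8 ± 1/100) for sufficiently large n, so the mean-reward intervals of distinct blocks are pairwise disjoint and all lie strictly between μ−C/2 and μ+C/2; (b) consequently the median arm of I equals the median arm of block I_{ξ+η+1}. -/
/-- `r`-th largest value (1-indexed) of a multiset of mean rewards. -/
noncomputable def kthM (M : Multiset ℝ) (r : ℕ) : ℝ :=
  (M.sort (· ≥ ·)).getD (r - 1) 0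

/-- Gap of an arm with mean `x` w.r.t. pivot `t` in the instance `M`. -/
noncomputable def gapM (M : Multiset ℝ) (t : ℕ) (x : ℝ) : ℝ :=
  if kthM M t ≤ x then x - kthM M (t + 1) else kthM M t - x

/-- Instance complexity `H^⟨t⟩(M) = Σ_{x∈M} (Δ_x^⟨t⟩(M))⁻²`. -/
noncomputable def HM (M : Multiset ℝ) (t : ℕ) : ℝ :=
  (M.map fun x => ((gapM M t x) ^ 2)⁻¹).sum

/-- The support of the recursively defined hard distribution `𝓘(C, μ, n)`
(for `K` agents), described as a multiset of mean rewards. -/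
inductive InSupport (K : ℕ) : ℝ → ℝ → ℕ → Multiset ℝ → Prop
  | base (C μ : ℝ) (n : ℕ) (hn : n ≤ K ^ 10) :
      InSupport K C μ n
        (Multiset.replicate ((n - 1) / 2) (μ + C / 2) +
          Multiset.replicate ((n - 1) / 2) (μ - C / 2) + {μ})
  | step (C μ : ℝ) (n η : ℕ) (hn : K ^ 10 < n)
      -- `η` is the smallest odd integer greater than `n^{1/4}`
      (hηodd : Odd η) (hηgt : (n : ℝ) ^ ((1 : ℝ) / 4) < η)
      (hηmin : ∀ η' : ℕ, Odd η' → (n : ℝ) ^ ((1 : ℝ) / 4) < (η' : ℝ) → η ≤ η')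
      -- the bias `ξ`
      (ξ : ℤ) (hξ1 : -(η : ℤ) ≤ ξ) (hξ2 : ξ ≤ (η : ℤ))
      -- numbers of top and bottom arms
      (t b : ℕ)
      (htb1 : (t : ℤ) + (b : ℤ) = (n : ℤ) - (η : ℤ) * (2 * (η : ℤ) + 1))
      (htb2 : (t : ℤ) - (b : ℤ) = 2 * ξ * (η : ℤ))
      -- the middle blocks, recursively from the hard distribution
      (blocks : Fin (2 * η + 1) → Multiset ℝ)
      (hblocks : ∀ j : Fin (2 * η + 1),
        InSupport K (C * Real.sqrt ((η : ℝ) / n))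
          (μ + ((j : ℝ) - η) / 8 * C * (n : ℝ) ^ (-(1 : ℝ) / 4)) η (blocks j)) :
      InSupport K C μ n
        (Multiset.replicate t (μ + C / 2) + Multiset.replicate b (μ - C / 2) +
          ∑ j, blocks j)

lemma card_finsetSum {α β : Type*} (s : Finset α) (f : α → Multiset β) :
    Multiset.card (∑ j ∈ s, f j) = ∑ j ∈ s, Multiset.card (f j) := by
  classical
  induction s using Finset.cons_induction with
  | empty => simp
  | cons a t h ih => simp [Finset.sum_cons, ih]

lemma sort_add_of_le (A B : Multiset ℝ) (h : ∀ a ∈ A, ∀ b ∈ B, b ≤ a) :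
    (A + B).sort (· ≥ ·) = A.sort (· ≥ ·) ++ B.sort (· ≥ ·) := by
  have inst : IsAntisymm ℝ (· ≥ ·) := ⟨fun a b h1 h2 => le_antisymm h2 h1⟩
  refine (fun hp h1 h2 => List.Perm.eq_of_pairwise' (r := (· ≥ ·)) h1 h2 hp) ?_ ?_ ?_
  · apply Multiset.coe_eq_coe.mp
    simp [Multiset.sort_eq, ← Multiset.coe_add]
  · exact Multiset.pairwise_sort _ _
  · rw [List.pairwise_append]
    refine ⟨Multiset.pairwise_sort _ _, Multiset.pairwise_sort _ _, ?_⟩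
    intro a ha b hb
    exact h a ((Multiset.mem_sort _).mp ha) b ((Multiset.mem_sort _).mp hb)

lemma quarter_pow (n : ℕ) : ((n:ℝ) ^ ((1:ℝ)/4)) ^ (4:ℕ) = n := by
  rw [← Real.rpow_natCast ((n:ℝ) ^ ((1:ℝ)/4)) 4, ← Real.rpow_mul (Nat.cast_nonneg n)]
  norm_num

lemma quarter_ge {n : ℕ} {c : ℝ} (hc : 0 ≤ c) (h : c ^ (4:ℕ) ≤ (n:ℝ)) :
    c ≤ (n:ℝ) ^ ((1:ℝ)/4) := by
  have h2 := Real.rpow_le_rpow (by positivity) h (by norm_num : (0:ℝ) ≤ 1/4)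
  rwa [← Real.rpow_natCast c 4, ← Real.rpow_mul hc, (by norm_num : ((4:ℕ):ℝ) * (1/4) = 1),
    Real.rpow_one] at h2

lemma neg_quarter (n : ℕ) : (n:ℝ) ^ (-(1:ℝ)/4) = ((n:ℝ) ^ ((1:ℝ)/4))⁻¹ := by
  rw [neg_div, Real.rpow_neg (Nat.cast_nonneg n)]

lemma eta_le_quarter_add_two {n η : ℕ}
    (hηmin : ∀ η' : ℕ, Odd η' → (n : ℝ) ^ ((1 : ℝ) / 4) < (η' : ℝ) → η ≤ η') :
    (η : ℝ) ≤ (n:ℝ) ^ ((1:ℝ)/4) + 2 := by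
  set x : ℝ := (n:ℝ) ^ ((1:ℝ)/4) with hx
  have hx0 : 0 ≤ x := by positivity
  have hfl : (⌊x⌋₊ : ℝ) ≤ x := Nat.floor_le hx0
  have hlt : x < ⌊x⌋₊ + 1 := Nat.lt_floor_add_one x
  rcases Nat.even_or_odd (⌊x⌋₊ + 1) with he | ho
  · have h1 : η ≤ ⌊x⌋₊ + 2 := hηmin _ (Even.add_one he) (by push_cast; linarith)
    have := (Nat.cast_le (α := ℝ)).mpr h1
    push_cast at this; linarith
  · have h1 : η ≤ ⌊x⌋₊ + 1 := hηmin _ ho (by push_cast; linarith)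
    have := (Nat.cast_le (α := ℝ)).mpr h1
    push_cast at this; linarith

/-- cardinality of an instance with odd size parameter -/
lemma card_inSupport {K : ℕ} {C μ : ℝ} {n : ℕ} {M : Multiset ℝ}
    (h : InSupport K C μ n M) (hodd : Odd n) : Multiset.card M = n := by
  induction h with
  | base C μ n hn =>
    obtain ⟨m, hm⟩ := hodd
    simp [Multiset.card_replicate]
    omega
  | step C μ n η hn hηodd hηgt hηmin ξ hξ1 hξ2 t b htb1 htb2 blocks hblocks ih =>
    have hcard : ∀ j, Multiset.card (blocks j) = η := fun j => ih j hηodd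
    simp only [Multiset.card_add, Multiset.card_replicate, card_finsetSum]
    rw [Finset.sum_congr rfl (fun j _ => hcard j), Finset.sum_const, Finset.card_univ,
      Fintype.card_fin, smul_eq_mul]
    zify
    linear_combination htb1

lemma span_inSupport {K : ℕ} (hK : 2 ≤ K) {C μ : ℝ} {n : ℕ} {M : Multiset ℝ}
    (h : InSupport K C μ n M) : 0 ≤ C → ∀ x ∈ M, |x - μ| ≤ C / 2 := by
  induction h with
  | base C μ n hn =>
    intro hC x hx
    simp only [Multiset.mem_add, Multiset.mem_replicate, Multiset.mem_singleton] at hx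
    rcases hx with (⟨-, hx⟩ | ⟨-, hx⟩) | hx <;> subst hx
    · rw [show μ + C/2 - μ = C/2 by ring, abs_of_nonneg (by linarith)]
    · rw [show μ - C/2 - μ = -(C/2) by ring, abs_neg, abs_of_nonneg (by linarith)]
    · simp; linarith
  | step C μ n η hn hηodd hηgt hηmin ξ hξ1 hξ2 t b htb1 htb2 blocks hblocks ih =>
    intro hC x hx
    simp only [Multiset.mem_add, Multiset.mem_replicate] at hx
    rcases hx with (⟨-, hx⟩ | ⟨-, hx⟩) | hx
    · subst hx
      rw [show μ + C/2 - μ = C/2 by ring, abs_of_nonneg (by linarith)]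
    · subst hx
      rw [show μ - C/2 - μ = -(C/2) by ring, abs_neg, abs_of_nonneg (by linarith)]
    · obtain ⟨j, -, hxj⟩ := Multiset.mem_sum.mp hx
      set X : ℝ := (n:ℝ) ^ ((1:ℝ)/4) with hXdef
      have hn1025 : 1025 ≤ n := by
        have : 2 ^ 10 ≤ K ^ 10 := Nat.pow_le_pow_left hK 10
        omega
      have hX4 : X ^ (4:ℕ) = n := quarter_pow n
      have hX5 : (5:ℝ) ≤ X := by
        apply quarter_ge (by norm_num)
        have : (1025:ℝ) ≤ (n:ℝ) := by exact_mod_cast Nat.cast_le.mpr hn1025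
        norm_num; linarith
      have hX0 : (0:ℝ) < X := by linarith
      have hηle : (η:ℝ) ≤ X + 2 := eta_le_quarter_add_two hηmin
      have hs0 : 0 ≤ Real.sqrt ((η:ℝ)/n) := Real.sqrt_nonneg _
      have hs : Real.sqrt ((η:ℝ)/n) ≤ 1/8 := by
        have hn0 : (0:ℝ) < n := by positivity
        have h1 : (η:ℝ)/n ≤ 1/64 := by
          rw [div_le_iff₀ hn0]
          have hcube : (125:ℝ) ≤ X^3 := by
            nlinarith [mul_nonneg (sub_nonneg.2 hX5) (sq_nonneg X),
              mul_nonneg (sub_nonneg.2 hX5) hX0.le, hX5]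
          have h4 : 125*X ≤ X^(4:ℕ) := by
            nlinarith [mul_le_mul_of_nonneg_right hcube hX0.le]
          nlinarith [hX4, hX5, hηle, h4]
        calc Real.sqrt ((η:ℝ)/n) ≤ Real.sqrt (1/64) := Real.sqrt_le_sqrt h1
          _ = 1/8 := by
              rw [show (1/64:ℝ) = (1/8)^2 by norm_num, Real.sqrt_sq (by norm_num)]
      have hinv : (n:ℝ) ^ (-(1:ℝ)/4) = X⁻¹ := neg_quarter n
      have hiX0 : 0 ≤ X⁻¹ := by positivity
      have hu : X⁻¹ ≤ 1/5 := by
        rw [inv_eq_one_div]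
        exact one_div_le_one_div_of_le (by norm_num) hX5
      have hj2η : ((j:ℕ):ℝ) ≤ 2*η := by
        have := j.isLt
        have h2 : (j:ℕ) ≤ 2*η := by omega
        exact_mod_cast h2
      have hj0 : (0:ℝ) ≤ ((j:ℕ):ℝ) := Nat.cast_nonneg _
      have hju : |((j:ℕ):ℝ) - η| ≤ (η:ℝ) := abs_le.mpr ⟨by linarith, by linarith⟩
      have hCs : 0 ≤ C * Real.sqrt ((η:ℝ)/n) := mul_nonneg hC hs0
      have hih := ih j hCs x hxj
      set μj : ℝ := μ + (((j:ℕ):ℝ) - η) / 8 * C * (n : ℝ) ^ (-(1 : ℝ) / 4) with hμj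
      have htri : |x - μ| ≤ |x - μj| + |μj - μ| := abs_sub_le x μj μ
      have habs : |μj - μ| ≤ (η:ℝ)/8 * C * X⁻¹ := by
        rw [hμj, hinv, show μ + (((j:ℕ):ℝ) - η) / 8 * C * X⁻¹ - μ
            = (((j:ℕ):ℝ) - η) / 8 * C * X⁻¹ by ring, abs_mul, abs_mul, abs_div,
          abs_of_nonneg hC, abs_of_nonneg hiX0, abs_of_nonneg (by norm_num : (0:ℝ) ≤ 8)]
        gcongr
      have hη2 : (η:ℝ) * X⁻¹ ≤ 7/5 := by
        have h1 : (η:ℝ) * X⁻¹ ≤ (X + 2) * X⁻¹ := by gcongr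
        have h2 : (X + 2) * X⁻¹ = 1 + 2 * X⁻¹ := by
          rw [add_mul, mul_inv_cancel₀ hX0.ne']
        linarith
      have e2 : (η:ℝ)/8 * C * X⁻¹ ≤ 7/40 * C := by
        have := mul_le_mul_of_nonneg_right hη2 hC
        nlinarith
      have e1 : C * Real.sqrt ((η:ℝ)/n) / 2 ≤ C * (1/8) / 2 := by gcongr
      linarith

set_option maxHeartbeats 1000000 in
theorem stmt12 :
    ∀ K : ℕ, 2 ≤ K → ∃ N : ℕ, ∀ n : ℕ, N ≤ n → K ^ 10 < n → Odd n →
      ∀ C μ : ℝ, 0 < C → C < 1 / 4 →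
        ∀ η : ℕ, Odd η → (n : ℝ) ^ ((1 : ℝ) / 4) < η →
          (∀ η' : ℕ, Odd η' → (n : ℝ) ^ ((1 : ℝ) / 4) < (η' : ℝ) → η ≤ η') →
        ∀ ξ : ℤ, -(η : ℤ) ≤ ξ → ξ ≤ (η : ℤ) →
        ∀ t b : ℕ,
          (t : ℤ) + (b : ℤ) = (n : ℤ) - (η : ℤ) * (2 * (η : ℤ) + 1) →
          (t : ℤ) - (b : ℤ) = 2 * ξ * (η : ℤ) →
        ∀ blocks : Fin (2 * η + 1) → Multiset ℝ,
          (∀ j : Fin (2 * η + 1),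
            InSupport K (C * Real.sqrt ((η : ℝ) / n))
              (μ + ((j : ℝ) - η) / 8 * C * (n : ℝ) ^ (-(1 : ℝ) / 4)) η (blocks j)) →
          -- (a) each arm of block `j` has its mean in the stated interval …
          (∀ j : Fin (2 * η + 1), ∀ x ∈ blocks j,
            |x - (μ + C * (n : ℝ) ^ (-(1 : ℝ) / 4) * ((j : ℝ) - η) / 8)|
              ≤ C * (n : ℝ) ^ (-(1 : ℝ) / 4) / 100) ∧
          -- … so the mean intervals of distinct blocks are pairwise disjoint …
          (∀ j j' : Fin (2 * η + 1), j < j' →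
            ∀ x ∈ blocks j, ∀ y ∈ blocks j', x < y) ∧
          -- … and all block means lie strictly between the bottom and top means
          (∀ j : Fin (2 * η + 1), ∀ x ∈ blocks j, μ - C / 2 < x ∧ x < μ + C / 2) ∧
          -- (b) the median arm of `I` is the median arm of block `ξ + η + 1`
          (∀ jm : Fin (2 * η + 1), (jm : ℤ) = ξ + (η : ℤ) →
            kthM (Multiset.replicate t (μ + C / 2) + Multiset.replicate b (μ - C / 2) +
                ∑ j, blocks j) ((n + 1) / 2)
              = kthM (blocks jm) ((η + 1) / 2)) := by
  intro K hK
  refine ⟨2600 ^ 4, ?_⟩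
  intro n hN hKn hnodd C μ hC hC4 η hηodd hηgt hηmin ξ hξ1 hξ2 t b htb1 htb2 blocks hblocks
  set X : ℝ := (n:ℝ) ^ ((1:ℝ)/4) with hXdef
  have hX4 : X ^ (4:ℕ) = n := quarter_pow n
  have hX2600 : (2600:ℝ) ≤ X := by
    apply quarter_ge (by norm_num)
    have : ((2600^4 : ℕ):ℝ) ≤ (n:ℝ) := Nat.cast_le.mpr hN
    push_cast at this
    norm_num
    linarith
  have hX0 : (0:ℝ) < X := by linarith
  have hinv : (n:ℝ) ^ (-(1:ℝ)/4) = X⁻¹ := neg_quarter n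
  have hiX0 : (0:ℝ) < X⁻¹ := by positivity
  have hiXle : X⁻¹ ≤ 1/2600 := by
    rw [inv_eq_one_div]
    exact one_div_le_one_div_of_le (by norm_num) hX2600
  have hηle : (η:ℝ) ≤ X + 2 := eta_le_quarter_add_two hηmin
  have hn0 : (0:ℝ) < n := by
    have : (0:ℝ) < X ^ (4:ℕ) := by positivity
    rwa [hX4] at this
  have hs0 : 0 ≤ Real.sqrt ((η:ℝ)/n) := Real.sqrt_nonneg _
  -- sharp bound on sqrt(η/n)
  have hs : Real.sqrt ((η:ℝ)/n) ≤ X⁻¹/50 := by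
    have h1 : (η:ℝ)/n ≤ (X⁻¹/50)^2 := by
      rw [div_le_iff₀ hn0]
      have h2 : (X⁻¹/50)^2 * (n:ℝ) = X^2/2500 := by
        rw [← hX4]
        field_simp
        ring
      rw [h2]
      nlinarith [hX2600, hηle, mul_le_mul_of_nonneg_left hX2600 hX0.le]
    calc Real.sqrt ((η:ℝ)/n) ≤ Real.sqrt ((X⁻¹/50)^2) := Real.sqrt_le_sqrt h1
      _ = X⁻¹/50 := Real.sqrt_sq (by positivity)
  -- part (a)
  have haa : ∀ j : Fin (2 * η + 1), ∀ x ∈ blocks j,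
      |x - (μ + C * (n : ℝ) ^ (-(1 : ℝ) / 4) * ((j : ℝ) - η) / 8)|
        ≤ C * (n : ℝ) ^ (-(1 : ℝ) / 4) / 100 := by
    intro j x hx
    have hsp := span_inSupport hK (hblocks j) (mul_nonneg hC.le hs0) x hx
    have hcenter : μ + C * (n:ℝ) ^ (-(1:ℝ)/4) * (((j:ℕ):ℝ) - η) / 8
        = μ + (((j:ℕ):ℝ) - η) / 8 * C * (n:ℝ) ^ (-(1:ℝ)/4) := by ring
    rw [hcenter]
    calc |x - (μ + (((j:ℕ):ℝ) - η) / 8 * C * (n:ℝ) ^ (-(1:ℝ)/4))|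
        ≤ C * Real.sqrt ((η:ℝ)/n) / 2 := hsp
      _ ≤ C * (X⁻¹/50) / 2 := by gcongr
      _ = C * X⁻¹ / 100 := by ring
      _ = C * (n:ℝ) ^ (-(1:ℝ)/4) / 100 := by rw [hinv]
  -- part (order)
  have hord : ∀ j j' : Fin (2 * η + 1), j < j' →
      ∀ x ∈ blocks j, ∀ y ∈ blocks j', x < y := by
    intro j j' hjj' x hx y hy
    have bx := haa j x hx
    have by' := haa j' y hy
    rw [hinv] at bx by'
    have hbx := (abs_le.mp bx).1
    have hbx2 := (abs_le.mp bx).2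
    have hby := (abs_le.mp by').1
    have hcast : ((j:ℕ):ℝ) + 1 ≤ ((j':ℕ):ℝ) := by
      have : (j:ℕ) + 1 ≤ (j':ℕ) := hjj'
      exact_mod_cast this
    have hd : 0 < C * X⁻¹ := mul_pos hC hiX0
    have hmm := mul_le_mul_of_nonneg_left hcast hd.le
    linarith
  -- part (between)
  have hbet : ∀ j : Fin (2 * η + 1), ∀ x ∈ blocks j, μ - C / 2 < x ∧ x < μ + C / 2 := by
    intro j x hx
    have bx := haa j x hx
    rw [hinv] at bx
    set cj : ℝ := μ + C * X⁻¹ * (((j:ℕ):ℝ) - η) / 8 with hcj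
    have htri : |x - μ| ≤ |x - cj| + |cj - μ| := abs_sub_le x cj μ
    have hj2η : ((j:ℕ):ℝ) ≤ 2*η := by
      have h2 : (j:ℕ) ≤ 2*η := by have := j.isLt; omega
      exact_mod_cast h2
    have hj0 : (0:ℝ) ≤ ((j:ℕ):ℝ) := Nat.cast_nonneg _
    have hju : |((j:ℕ):ℝ) - η| ≤ (η:ℝ) := abs_le.mpr ⟨by linarith, by linarith⟩
    have habs : |cj - μ| ≤ (η:ℝ) * (C * X⁻¹) / 8 := by
      rw [hcj, show μ + C * X⁻¹ * (((j:ℕ):ℝ) - η) / 8 - μ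
          = C * X⁻¹ * ((((j:ℕ):ℝ) - η)) / 8 by ring, abs_div, abs_mul, abs_mul,
        abs_of_nonneg hC.le, abs_of_nonneg hiX0.le,
        abs_of_nonneg (by norm_num : (0:ℝ) ≤ 8)]
      rw [div_le_div_iff₀ (by norm_num) (by norm_num)]
      have hmm := mul_le_mul_of_nonneg_left hju (mul_nonneg hC.le hiX0.le)
      linarith
    have hη2 : (η:ℝ) * X⁻¹ ≤ 2 := by
      have h1 : (η:ℝ) * X⁻¹ ≤ (X + 2) * X⁻¹ := by gcongr
      have h2 : (X + 2) * X⁻¹ = 1 + 2 * X⁻¹ := by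
        rw [add_mul, mul_inv_cancel₀ hX0.ne']
      linarith
    have e2 : (η:ℝ) * (C * X⁻¹) / 8 ≤ C / 4 := by
      have := mul_le_mul_of_nonneg_right hη2 hC.le
      linarith
    have e1 : C * X⁻¹ / 100 ≤ C / 100 := by
      have hXi1 : X⁻¹ ≤ 1 := by linarith
      have hmm := mul_le_mul_of_nonneg_left hXi1 hC.le
      linarith
    have hfin : |x - μ| < C / 2 := by linarith
    have := abs_lt.mp hfin
    constructor <;> linarith [this.1, this.2]
  refine ⟨haa, hord, hbet, ?_⟩
  -- part (b)
  intro jm hjm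
  set T := Multiset.replicate t (μ + C / 2) with hT
  set B := Multiset.replicate b (μ - C / 2) with hB
  set Sp := ∑ j ∈ Finset.Ioi jm, blocks j with hSpdef
  set Sm := ∑ j ∈ Finset.Iio jm, blocks j with hSmdef
  have hcardb : ∀ j, Multiset.card (blocks j) = η := fun j => card_inSupport (hblocks j) hηodd
  have hsplit : ∑ j, blocks j = blocks jm + (Sp + Sm) := by
    have he : (Finset.univ.erase jm) = Finset.Ioi jm ∪ Finset.Iio jm := by
      ext k
      simp only [Finset.mem_erase, Finset.mem_univ, and_true, Finset.mem_union,
        Finset.mem_Ioi, Finset.mem_Iio, Fin.lt_def, ne_eq, Fin.ext_iff]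
      omega
    have hdisj : Disjoint (Finset.Ioi jm) (Finset.Iio jm) := by
      rw [Finset.disjoint_left]
      intro a ha ha'
      rw [Finset.mem_Ioi] at ha
      rw [Finset.mem_Iio] at ha'
      exact absurd (ha.trans ha') (lt_irrefl jm)
    rw [← Finset.add_sum_erase _ blocks (Finset.mem_univ jm), he, Finset.sum_union hdisj]
  have hMeq : T + B + ∑ j, blocks j = (T + Sp) + (blocks jm + (Sm + B)) := by
    rw [hsplit]; abel
  -- everything in the left part dominates everything in the right part
  have h1 : ∀ a ∈ T + Sp, ∀ y ∈ blocks jm + (Sm + B), y ≤ a := by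
    intro a ha y hy
    have hya : y ≤ μ + C / 2 ∧ μ - C / 2 ≤ y ∨ y = μ - C / 2 := by
      rcases Multiset.mem_add.mp hy with hym | hy2
      · have := hbet jm y hym; exact Or.inl ⟨this.2.le, this.1.le⟩
      · rcases Multiset.mem_add.mp hy2 with hyS | hyB
        · obtain ⟨j', hj', hyj'⟩ := Multiset.mem_sum.mp hyS
          have := hbet j' y hyj'; exact Or.inl ⟨this.2.le, this.1.le⟩
        · exact Or.inr (Multiset.eq_of_mem_replicate hyB)
    rcases Multiset.mem_add.mp ha with haT | haS
    · rw [Multiset.eq_of_mem_replicate haT]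
      rcases hya with ⟨h', -⟩ | h' <;> [exact h'; (rw [h']; linarith)]
    · obtain ⟨j, hj, haj⟩ := Multiset.mem_sum.mp haS
      rw [Finset.mem_Ioi] at hj
      rcases Multiset.mem_add.mp hy with hym | hy2
      · exact (hord jm j hj y hym a haj).le
      · rcases Multiset.mem_add.mp hy2 with hyS | hyB
        · obtain ⟨j', hj', hyj'⟩ := Multiset.mem_sum.mp hyS
          rw [Finset.mem_Iio] at hj'
          exact (hord j' j (hj'.trans hj) y hyj' a haj).le
        · rw [Multiset.eq_of_mem_replicate hyB]
          exact (hbet j a haj).1.le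
  have h2 : ∀ a ∈ blocks jm, ∀ y ∈ Sm + B, y ≤ a := by
    intro a ha y hy
    rcases Multiset.mem_add.mp hy with hyS | hyB
    · obtain ⟨j', hj', hyj'⟩ := Multiset.mem_sum.mp hyS
      rw [Finset.mem_Iio] at hj'
      exact (hord j' jm hj' y hyj' a ha).le
    · rw [Multiset.eq_of_mem_replicate hyB]
      exact (hbet jm a ha).1.le
  have hsort1 : ((T + Sp) + (blocks jm + (Sm + B))).sort (· ≥ ·)
      = (T + Sp).sort (· ≥ ·) ++ (blocks jm + (Sm + B)).sort (· ≥ ·) :=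
    sort_add_of_le _ _ h1
  have hsort2 : (blocks jm + (Sm + B)).sort (· ≥ ·)
      = (blocks jm).sort (· ≥ ·) ++ (Sm + B).sort (· ≥ ·) :=
    sort_add_of_le _ _ h2
  have hlen1 : ((T + Sp).sort (· ≥ ·)).length = t + (2*η - (jm:ℕ)) * η := by
    rw [Multiset.length_sort, Multiset.card_add, hT, Multiset.card_replicate, hSpdef,
      card_finsetSum, Finset.sum_congr rfl (fun j _ => hcardb j), Finset.sum_const,
      smul_eq_mul, Fin.card_Ioi]
    have h9 : (2*η+1) - 1 - (jm:ℕ) = 2*η - (jm:ℕ) := by omega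
    rw [h9]
  have hlenm : ((blocks jm).sort (· ≥ ·)).length = η := by
    rw [Multiset.length_sort, hcardb]
  -- index arithmetic
  obtain ⟨m, hm⟩ := hnodd
  obtain ⟨k, hk⟩ := hηodd
  have hjmle : (jm:ℕ) ≤ 2*η := by have := jm.isLt; omega
  have hmz : (n:ℤ) = 2*m + 1 := by exact_mod_cast congrArg (Nat.cast : ℕ → ℤ) hm
  have hkz : (η:ℤ) = 2*k + 1 := by exact_mod_cast congrArg (Nat.cast : ℕ → ℤ) hk
  set q : ℕ := t + (2*η - (jm:ℕ))*η with hq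
  have hqz : (q:ℤ) = (t:ℤ) + ((η:ℤ) - ξ)*(η:ℤ) := by
    rw [hq]
    push_cast [Nat.cast_sub hjmle]
    linear_combination -(η:ℤ)*hjm
  have h2q : 2*(q:ℤ) + 2*(k:ℤ) = 2*(m:ℤ) := by
    linear_combination 2*hqz + htb1 + htb2 + hmz - hkz
  have hidx : (n+1)/2 - 1 = q + ((η+1)/2 - 1) := by omega
  show (((T + B + ∑ j, blocks j)).sort (· ≥ ·)).getD ((n+1)/2 - 1) 0
      = ((blocks jm).sort (· ≥ ·)).getD ((η+1)/2 - 1) 0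
  rw [hMeq, hsort1, hsort2, hidx, ← hlen1]
  rw [List.getD_append_right _ _ _ _ (Nat.le_add_right _ _), Nat.add_sub_cancel_left]
  rw [List.getD_append _ _ _ _ (by rw [hlenm]; omega)]
end

section
/- Fix ε ∈ (0,1/8), μ ∈ (3/8,5/8), and intger T_i with T_i ≤ ε^{−2}/10000. If r is an integer with |r − μT_i| ≤ 1/(40ε), then the posterior probability p = 1 / (1 + ((μ−ε)/(μ+ε))^r · ((1−μ+ε)/(1−μ−ε))^{T_i−r}) satisfies p ∈ [0.4, 0.6]. -/
lemma aux_log_lb (x : ℝ) (hx : 0 ≤ x) : x - x^2 ≤ Real.log (1 + x) := by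
  have h1 : (0:ℝ) < 1 + x := by linarith
  have h2 := Real.log_le_sub_one_of_pos (show (0:ℝ) < (1+x)⁻¹ by positivity)
  rw [Real.log_inv] at h2
  have h3 : x - x^2 ≤ 1 - (1+x)⁻¹ := by
    have he : (1:ℝ) - (1+x)⁻¹ = x / (1+x) := by field_simp; ring
    rw [he, le_div_iff₀ h1]; nlinarith
  linarith

lemma aux_log_ub (x : ℝ) (hx : 0 ≤ x) : Real.log (1 + x) ≤ x := by
  have := Real.log_le_sub_one_of_pos (show (0:ℝ) < 1 + x by linarith)
  linarith

lemma aux_E (ε μ E : ℝ) (hε0 : 0 < ε) (hε : ε < 1/8) (hμ1 : 3/8 < μ) (hμ2 : μ < 5/8)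
    (hE : E * ((μ-ε)*(1-μ-ε)) = 2*ε^2*(2*μ-1)) : |E| ≤ 8*ε^2 := by
  have hPpos : (0:ℝ) < (μ-ε)*(1-μ-ε) := mul_pos (by linarith) (by linarith)
  have h6 : (0:ℝ) < ε^2 := by positivity
  rw [abs_le]
  constructor
  · by_contra h
    push_neg at h
    have h5 := mul_lt_mul_of_pos_right h hPpos
    rw [hE] at h5
    have h7 : 2*μ - 1 + 4*((μ-ε)*(1-μ-ε)) > 0 := by nlinarith
    nlinarith
  · by_contra h
    push_neg at h
    have h5 := mul_lt_mul_of_pos_right h hPpos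
    rw [hE] at h5
    have h7 : 4*((μ-ε)*(1-μ-ε)) - (2*μ - 1) > 0 := by nlinarith
    nlinarith

lemma aux_X (ε μ X : ℝ) (hε0 : 0 < ε) (hε : ε < 1/8) (hμ1 : 3/8 < μ) (hμ2 : μ < 5/8)
    (hX : X * ((μ-ε)*(1-μ-ε)) = 2*ε*(1-2*ε)) : X ≤ 12*ε := by
  have hPpos : (0:ℝ) < (μ-ε)*(1-μ-ε) := mul_pos (by linarith) (by linarith)
  by_contra h
  push_neg at h
  have h5 := mul_lt_mul_of_pos_right h hPpos
  rw [hX] at h5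
  have h6 : (0:ℝ) ≤ ε*(1/8-ε)*(13/24-ε) :=
    mul_nonneg (mul_nonneg hε0.le (by linarith)) (by linarith)
  have h7 : (0:ℝ) ≤ ε*(μ-3/8)*(5/8-μ) :=
    mul_nonneg (mul_nonneg hε0.le (by linarith)) (by linarith)
  nlinarith

lemma aux_S (μ la lb xa xb e2 : ℝ) (hμ0 : 0 ≤ μ) (hμ1 : μ ≤ 1)
    (hla_lb : -xa ≤ la) (hla_ub : la ≤ -xa + xa^2)
    (hlb_lb : xb - xb^2 ≤ lb) (hlb_ub : lb ≤ xb)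
    (hE_ub : -(μ*xa) + (1-μ)*xb ≤ 8*e2) (hE_lb : -(8*e2) ≤ -(μ*xa) + (1-μ)*xb)
    (hxa2 : xa^2 ≤ 64*e2) (hxb2 : xb^2 ≤ 64*e2) :
    |μ*la + (1-μ)*lb| ≤ 72*e2 := by
  have h1 : μ*la ≤ μ*(-xa + xa^2) := mul_le_mul_of_nonneg_left hla_ub hμ0
  have h2 : μ*(-xa) ≤ μ*la := mul_le_mul_of_nonneg_left hla_lb hμ0
  have h3 : (1-μ)*lb ≤ (1-μ)*xb := mul_le_mul_of_nonneg_left hlb_ub (by linarith)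
  have h4 : (1-μ)*(xb - xb^2) ≤ (1-μ)*lb := mul_le_mul_of_nonneg_left hlb_lb (by linarith)
  have h5 : μ*xa^2 ≤ xa^2 := mul_le_of_le_one_left (sq_nonneg xa) hμ1
  have h6 : (1-μ)*xb^2 ≤ xb^2 := mul_le_of_le_one_left (sq_nonneg xb) (by linarith)
  rw [abs_le]
  constructor <;> nlinarith

set_option maxHeartbeats 1000000 in
theorem stmt13 (ε μ : ℝ) (hε0 : 0 < ε) (hε : ε < 1 / 8)
    (hμ1 : 3 / 8 < μ) (hμ2 : μ < 5 / 8)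
    (T r : ℤ) (hT0 : 0 ≤ T) (hT : (T : ℝ) ≤ ε⁻¹ ^ 2 / 10000)
    (hr : |(r : ℝ) - μ * T| ≤ 1 / (40 * ε)) :
    (1 : ℝ) / (1 + ((μ - ε) / (μ + ε)) ^ r * ((1 - μ + ε) / (1 - μ - ε)) ^ (T - r))
      ∈ Set.Icc (0.4 : ℝ) 0.6 := by
  have h1 : (1:ℝ)/4 < μ - ε := by linarith
  have h2 : (0:ℝ) < μ + ε := by linarith
  have h3 : (1:ℝ)/4 < 1 - μ - ε := by linarith
  have h4 : (0:ℝ) < 1 - μ + ε := by linarith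
  set a := (μ - ε) / (μ + ε) with ha
  set b := (1 - μ + ε) / (1 - μ - ε) with hb
  have ha0 : 0 < a := div_pos (by linarith) h2
  have hb0 : 0 < b := div_pos h4 (by linarith)
  set L := a ^ r * b ^ (T - r) with hLdef
  have hL0 : 0 < L := mul_pos (zpow_pos ha0 r) (zpow_pos hb0 _)
  set xa := 2*ε/(μ-ε) with hxa
  set xb := 2*ε/(1-μ-ε) with hxb
  have hxa0 : 0 ≤ xa := by positivity
  have hxb0 : 0 ≤ xb := by positivity
  have hxa8 : xa ≤ 8*ε := by rw [hxa, div_le_iff₀ (by linarith)]; nlinarith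
  have hxb8 : xb ≤ 8*ε := by rw [hxb, div_le_iff₀ (by linarith)]; nlinarith
  have hxa1 : xa ≤ 1 := by linarith
  have hxb1 : xb ≤ 1 := by linarith
  have hxaq : xa^2 ≤ xa := by nlinarith
  have hxbq : xb^2 ≤ xb := by nlinarith
  have hxa2 : xa^2 ≤ 64*ε^2 := by nlinarith
  have hxb2 : xb^2 ≤ 64*ε^2 := by nlinarith
  -- log a bounds
  have hainv : a⁻¹ = 1 + xa := by rw [ha, hxa]; field_simp; ring
  have hloga : Real.log a = -Real.log (1 + xa) := by
    rw [← hainv, Real.log_inv, neg_neg]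
  have hla_lb : -xa ≤ Real.log a := by
    have := aux_log_ub xa hxa0; rw [hloga]; linarith
  have hla_ub : Real.log a ≤ -xa + xa^2 := by
    have := aux_log_lb xa hxa0; rw [hloga]; linarith
  have hbeq : b = 1 + xb := by rw [hb, hxb]; field_simp; ring
  have hlb_lb : xb - xb^2 ≤ Real.log b := by rw [hbeq]; exact aux_log_lb xb hxb0
  have hlb_ub : Real.log b ≤ xb := by rw [hbeq]; exact aux_log_ub xb hxb0
  -- E bound
  have hE : (-(μ*xa) + (1-μ)*xb) * ((μ-ε)*(1-μ-ε)) = 2*ε^2*(2*μ-1) := by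
    rw [hxa, hxb]; field_simp; ring
  have hE1 := aux_E ε μ _ hε0 hε hμ1 hμ2 hE
  rw [abs_le] at hE1
  -- S bound
  have hS : |μ*Real.log a + (1-μ)*Real.log b| ≤ 72*ε^2 :=
    aux_S μ (Real.log a) (Real.log b) xa xb (ε^2) (by linarith) (by linarith)
      hla_lb hla_ub hlb_lb hlb_ub hE1.2 hE1.1 hxa2 hxb2
  -- xa + xb ≤ 12 ε
  have hXsum : xa + xb ≤ 12*ε := by
    refine aux_X ε μ _ hε0 hε hμ1 hμ2 ?_
    rw [hxa, hxb]; field_simp; ring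
  -- D bound
  have hD : |Real.log a - Real.log b| ≤ 12*ε := by
    rw [abs_le]
    constructor
    · linarith
    · linarith
  -- log L
  have hlogL : Real.log L = (r:ℝ) * Real.log a + ((T:ℝ) - r) * Real.log b := by
    rw [hLdef, Real.log_mul (ne_of_gt (zpow_pos ha0 r)) (ne_of_gt (zpow_pos hb0 _)),
      Real.log_zpow, Real.log_zpow]
    push_cast; ring
  have hT0' : (0:ℝ) ≤ (T:ℝ) := by exact_mod_cast hT0
  have hTe : (T:ℝ) * ε^2 ≤ 1/10000 := by
    have h5 := mul_le_mul_of_nonneg_right hT (sq_nonneg ε)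
    have h6 : ε⁻¹^2/10000*ε^2 = 1/10000 := by field_simp
    linarith
  have habs1 : |(T:ℝ) * (μ*Real.log a + (1-μ)*Real.log b)| ≤ 72/10000 := by
    rw [abs_mul, abs_of_nonneg hT0']
    calc (T:ℝ) * |μ*Real.log a + (1-μ)*Real.log b| ≤ (T:ℝ) * (72*ε^2) :=
          mul_le_mul_of_nonneg_left hS hT0'
      _ = 72*((T:ℝ)*ε^2) := by ring
      _ ≤ 72/10000 := by linarith
  have habs2 : |((r:ℝ) - μ*T) * (Real.log a - Real.log b)| ≤ 3/10 := by
    rw [abs_mul]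
    calc |(r:ℝ) - μ*T| * |Real.log a - Real.log b| ≤ (1/(40*ε)) * (12*ε) :=
          mul_le_mul hr hD (abs_nonneg _) (by positivity)
      _ = 3/10 := by field_simp; ring
  have hlogabs : |Real.log L| ≤ 31/100 := by
    rw [hlogL]
    have hdec : (r:ℝ) * Real.log a + ((T:ℝ) - r) * Real.log b
        = (T:ℝ) * (μ*Real.log a + (1-μ)*Real.log b)
          + ((r:ℝ) - μ*T) * (Real.log a - Real.log b) := by ring
    rw [hdec]
    calc |_ + _| ≤ _ + _ := abs_add_le _ _
      _ ≤ 72/10000 + 3/10 := add_le_add habs1 habs2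
      _ ≤ 31/100 := by linarith
  -- conclude L ∈ [2/3, 3/2]
  rw [abs_le] at hlogabs
  have hexp : (69/100:ℝ) ≤ Real.exp (-(31/100)) := by
    have h5 := Real.add_one_le_exp (-(31/100):ℝ)
    linarith only [h5]
  have hLlb : (2:ℝ)/3 ≤ L := by
    have h5 : Real.exp (-(31/100)) ≤ L := by
      rw [← Real.exp_log hL0]
      exact Real.exp_le_exp.mpr (by linarith only [hlogabs.1])
    linarith only [h5, hexp]
  have hLub : L ≤ 3/2 := by
    have h5 : L ≤ Real.exp (31/100) := by
      rw [← Real.exp_log hL0]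
      exact Real.exp_le_exp.mpr hlogabs.2
    have h6 : Real.exp (31/100) = (Real.exp (-(31/100)))⁻¹ := by
      rw [← Real.exp_neg, neg_neg]
    have h7 : (Real.exp (-(31/100)))⁻¹ ≤ (69/100:ℝ)⁻¹ :=
      inv_anti₀ (by norm_num) hexp
    have h8 : ((69:ℝ)/100)⁻¹ ≤ 3/2 := by norm_num
    rw [h6] at h5
    linarith only [h5, h7, h8]
  have hden : (0:ℝ) < 1 + L := by linarith only [hL0]
  constructor
  · rw [le_div_iff₀ hden]
    linarith only [hLub]
  · rw [div_le_iff₀ hden]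
    linarith only [hLlb]
end

section
/- Let S be a set of m arms and suppose for all i: |θ̂_i − θ_i| ≤ Δ_i/8 where Δ_i = θ̃_i − θ̃_r for i ∈ S, Δ_i = θ̃_ℓ − θ̃_i for i ∉ S (ℓ = argmin_{i∈S} θ̃_i, r = argmax_{i∉S} θ̃_i), all Δ_i > 0. If min_{i∈S}(θ̂_i − Δ_i/4) > max_{i∉S}(θ̂_i + Δ_i/4), then S is exactly the set of m arms with the largest true means. -/
theorem stmt18 (n m : ℕ) (θ θhat θtil : Fin n → ℝ)
    (S : Finset (Fin n)) (hScard : S.card = m)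
    (ℓ r : Fin n) (hℓS : ℓ ∈ S) (hℓmin : ∀ i ∈ S, θtil ℓ ≤ θtil i)
    (hrS : r ∉ S) (hrmax : ∀ i ∉ S, θtil i ≤ θtil r)
    (Δ : Fin n → ℝ)
    (hΔ : ∀ i, Δ i = if i ∈ S then θtil i - θtil r else θtil ℓ - θtil i)
    (hΔpos : ∀ i, 0 < Δ i)
    (hest : ∀ i, |θhat i - θ i| ≤ Δ i / 8)
    (hsep : ∀ i ∈ S, ∀ j ∉ S, θhat j + Δ j / 4 < θhat i - Δ i / 4) :
    ∀ i ∈ S, ∀ j ∉ S, θ j < θ i := by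
  intro i hi j hj
  have hi' := abs_sub_le_iff.mp (hest i)
  have hj' := abs_sub_le_iff.mp (hest j)
  have := hsep i hi j hj
  have := hΔpos i
  have := hΔpos j
  linarith [hi'.1, hi'.2, hj'.1, hj'.2]
end

section
/- Let (S, {θ̃_i}) be a top-m certificate, i.e., S = Top_m and |θ̃_i − θ_i| < Δ_i^⟨m⟩/4 for all i. Define Δ_i = θ̃_i − θ̃_r for i ∈ S and Δ_i = θ̃_ℓ − θ̃_i for i ∉ S, where ℓ achieves min_{i∈S} θ̃_i and r achieves max_{i∉S} θ̃_i. Then for every arm i: Δ_i^⟨m⟩/2 ≤ Δ_i ≤ 3·Δ_i^⟨m⟩/2, and consequently Σ_i Δ_i^{−2} ≤ 4·H^⟨m⟩ and Σ_i Δ_i^{−2} ≥ (4/9)·H^⟨m⟩. -/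
theorem stmt19 (n m : ℕ) (θ θtil : Fin n → ℝ)
    (S : Finset (Fin n)) (hScard : S.card = m)
    (hSne : S.Nonempty) (hScne : Sᶜ.Nonempty)
    -- `S` is exactly the set of the `m` arms with the largest true means
    (hTop : ∀ i ∈ S, ∀ j ∉ S, θ j < θ i)
    -- the gaps `Δ_i^⟨m⟩` with pivot `m`: `θ_{[m]} = min_{i∈S} θ_i`,
    -- `θ_{[m+1]} = max_{j∉S} θ_j`
    (Δm : Fin n → ℝ)
    (hΔm : ∀ i, Δm i =
      if i ∈ S then θ i - Sᶜ.sup' hScne θ else S.inf' hSne θ - θ i)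
    -- certificate property
    (hcert : ∀ i, |θtil i - θ i| < Δm i / 4)
    (ℓ r : Fin n) (hℓS : ℓ ∈ S) (hℓmin : ∀ i ∈ S, θtil ℓ ≤ θtil i)
    (hrS : r ∉ S) (hrmax : ∀ i ∉ S, θtil i ≤ θtil r)
    (Δ : Fin n → ℝ)
    (hΔ : ∀ i, Δ i = if i ∈ S then θtil i - θtil r else θtil ℓ - θtil i) :
    (∀ i, Δm i / 2 ≤ Δ i ∧ Δ i ≤ 3 * Δm i / 2) ∧
      ∑ i, ((Δ i) ^ 2)⁻¹ ≤ 4 * ∑ i, ((Δm i) ^ 2)⁻¹ ∧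
      (4 / 9 : ℝ) * ∑ i, ((Δm i) ^ 2)⁻¹ ≤ ∑ i, ((Δ i) ^ 2)⁻¹ := by
  set a := Sᶜ.sup' hScne θ with ha
  set b := S.inf' hSne θ with hb
  obtain ⟨js, hjs, hja⟩ := Finset.exists_mem_eq_sup' hScne θ
  obtain ⟨is, his, hib⟩ := Finset.exists_mem_eq_inf' hSne θ
  have hjs' : js ∉ S := by simpa using hjs
  have hab : a < b := by
    have h := hTop _ his _ hjs'
    rw [ha, hb, hja, hib]; exact h
  have hθa : ∀ j, j ∉ S → θ j ≤ a := fun j hj =>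
    Finset.le_sup' θ (by simpa using hj)
  have hbθ : ∀ i ∈ S, b ≤ θ i := fun i hi => Finset.inf'_le θ hi
  have hΔmS : ∀ i ∈ S, Δm i = θ i - a := fun i hi => by rw [hΔm i, if_pos hi]
  have hΔmSc : ∀ i, i ∉ S → Δm i = b - θ i := fun i hi => by
    rw [hΔm i, if_neg hi]
  have hΔmge : ∀ i, b - a ≤ Δm i := by
    intro i
    by_cases h : i ∈ S
    · rw [hΔmS i h]; linarith [hbθ i h]
    · rw [hΔmSc i h]; linarith [hθa i h]
  -- bounds on θtil r
  have hrub : θtil r ≤ a + (b - a) / 4 := by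
    have h1 := (abs_lt.mp (hcert r)).2
    rw [hΔmSc r hrS] at h1
    have := hθa r hrS; linarith
  have hrlb : a - (b - a) / 4 ≤ θtil r := by
    have h1 := (abs_lt.mp (hcert js)).1
    rw [hΔmSc js hjs'] at h1
    have h2 := hrmax js hjs'
    have h3 : θ js = a := hja.symm
    linarith
  -- bounds on θtil ℓ
  have hlub : θtil ℓ ≤ b + (b - a) / 4 := by
    have h1 := (abs_lt.mp (hcert is)).2
    rw [hΔmS is his] at h1
    have h2 := hℓmin is his
    have h3 : θ is = b := hib.symm
    linarith
  have hllb : b - (b - a) / 4 ≤ θtil ℓ := by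
    have h1 := (abs_lt.mp (hcert ℓ)).1
    rw [hΔmS ℓ hℓS] at h1
    have := hbθ ℓ hℓS
    linarith
  have key : ∀ i, Δm i / 2 ≤ Δ i ∧ Δ i ≤ 3 * Δm i / 2 := by
    intro i
    have hge := hΔmge i
    by_cases h : i ∈ S
    · have h1 := abs_lt.mp (hcert i)
      rw [hΔmS i h] at h1 ⊢
      rw [hΔ i, if_pos h]
      have hbi := hbθ i h
      constructor <;> [linarith [h1.1, hrub]; linarith [h1.2, hrlb]]
    · have h1 := abs_lt.mp (hcert i)
      rw [hΔmSc i h] at h1 ⊢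
      rw [hΔ i, if_neg h]
      have hai := hθa i h
      constructor <;> [linarith [h1.2, hllb]; linarith [h1.1, hlub]]
  refine ⟨key, ?_, ?_⟩
  · rw [Finset.mul_sum]
    apply Finset.sum_le_sum
    intro i _
    have hΔmpos : 0 < Δm i := lt_of_lt_of_le (by linarith) (hΔmge i)
    have hΔpos : 0 < Δ i := lt_of_lt_of_le (by linarith) (key i).1
    have hsq : (Δm i / 2) ^ 2 ≤ (Δ i) ^ 2 := by
      apply pow_le_pow_left₀ (by positivity) (key i).1
    have h2 : ((Δ i) ^ 2)⁻¹ ≤ ((Δm i / 2) ^ 2)⁻¹ :=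
      inv_anti₀ (by positivity) hsq
    calc ((Δ i) ^ 2)⁻¹ ≤ ((Δm i / 2) ^ 2)⁻¹ := h2
      _ = 4 * ((Δm i) ^ 2)⁻¹ := by field_simp; ring
  · rw [Finset.mul_sum]
    apply Finset.sum_le_sum
    intro i _
    have hΔmpos : 0 < Δm i := lt_of_lt_of_le (by linarith) (hΔmge i)
    have hΔpos : 0 < Δ i := lt_of_lt_of_le (by linarith) (key i).1
    have hsq : (Δ i) ^ 2 ≤ (3 * Δm i / 2) ^ 2 := by
      apply pow_le_pow_left₀ (le_of_lt hΔpos) (key i).2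
    have h2 : ((3 * Δm i / 2) ^ 2)⁻¹ ≤ ((Δ i) ^ 2)⁻¹ :=
      inv_anti₀ (by positivity) hsq
    calc (4 / 9 : ℝ) * ((Δm i) ^ 2)⁻¹ = ((3 * Δm i / 2) ^ 2)⁻¹ := by
          field_simp; ring
      _ ≤ ((Δ i) ^ 2)⁻¹ := h2
end
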